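/- arXiv:2604.15672 — 2 statements merged into one kernel-verified Lean document; each statement's English description precedes it below -/
import Mathlib

section
/- Assume E_q[W⁴] < ∞. There is a constant C depending only on E_q[W⁴] and χ²(p‖q) (not on A or N) such that for every subset A of Σ* and every N ≥ 1, the self-normalized importance sampling estimator satisfies E[(p̂_N(A) − p(A))²] ≤ (1 + χ²(p‖q))/N + C·N^{−3/2}. -/
/-!
Statement 1: Assume `E_q[W⁴] < ∞`. There is a constant `C` depending only on
`E_q[W⁴]` and `χ²(p‖q)` (in particular not on `A` or `N`) such that for every
`A ⊆ Σ*` and every `N ≥ 1`, the self-normalized importance sampling estimator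
satisfies `E[(p̂_N(A) − p(A))²] ≤ (1 + χ²(p‖q))/N + C·N^{−3/2}`.
-/

noncomputable section

open scoped BigOperators

variable {σ : Type*}

/-- Expectation of `f` under `N` i.i.d. samples drawn from the pmf `q`. -/
def expN (q : σ → ℝ) (N : ℕ) (f : (Fin N → σ) → ℝ) : ℝ :=
  ∑' ω : Fin N → σ, (∏ n, q (ω n)) * f ω


/-- sum of h over coordinates -/
def SS (h : σ → ℝ) (n : ℕ) (ω : Fin n → σ) : ℝ := ∑ i, h (ω i)

lemma expN_zero (q : σ → ℝ) (f : (Fin 0 → σ) → ℝ) : expN q 0 f = f default := by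
  rw [expN, tsum_eq_single (default : Fin 0 → σ)
    (fun b hb => absurd (Subsingleton.elim b default) hb)]
  simp

lemma split_aux (q g : σ → ℝ) {n : ℕ} (f : (Fin n → σ) → ℝ)
    (hg : Summable (fun x => q x * g x))
    (hf : Summable (fun ρ : Fin n → σ => (∏ i, q (ρ i)) * f ρ)) :
    Summable (fun ω : Fin (n+1) → σ =>
        (∏ i, q (ω i)) * (g (ω 0) * f (fun i => ω i.succ)))
    ∧ expN q (n+1) (fun ω => g (ω 0) * f (fun i => ω i.succ))
      = (∑' x, q x * g x) * expN q n f := by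
  classical
  set e : σ × (Fin n → σ) ≃ (Fin (n+1) → σ) := Fin.consEquiv (fun _ => σ) with he
  set F : (Fin (n+1) → σ) → ℝ :=
    fun ω => (∏ i, q (ω i)) * (g (ω 0) * f (fun i => ω i.succ)) with hF
  have hcomp : ∀ z : σ × (Fin n → σ),
      F (e z) = (q z.1 * g z.1) * ((∏ i, q (z.2 i)) * f z.2) := by
    rintro ⟨x, ρ⟩
    have h0 : e (x, ρ) = Fin.cons x ρ := rfl
    rw [h0]
    simp [hF, Fin.prod_univ_succ]
    ring
  have hFz : Summable (fun z : σ × (Fin n → σ) =>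
      (q z.1 * g z.1) * ((∏ i, q (z.2 i)) * f z.2)) := by
    apply summable_mul_of_summable_norm (f := fun x => q x * g x)
      (g := fun ρ : Fin n → σ => (∏ i, q (ρ i)) * f ρ)
    · simpa only [Real.norm_eq_abs] using hg.abs
    · simpa only [Real.norm_eq_abs] using hf.abs
  have hsum : Summable F := by
    apply e.summable_iff.mp
    have hce : F ∘ e = fun z : σ × (Fin n → σ) =>
        (q z.1 * g z.1) * ((∏ i, q (z.2 i)) * f z.2) := funext hcomp
    rw [hce]; exact hFz
  constructor
  · exact hsum
  · have h1 : expN q (n+1) (fun ω => g (ω 0) * f (fun i => ω i.succ))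
        = ∑' ω : Fin (n+1) → σ, F ω := rfl
    rw [h1, ← e.tsum_eq F]
    have h2 : ∑' z : σ × (Fin n → σ), F (e z)
        = ∑' z : σ × (Fin n → σ), (q z.1 * g z.1) * ((∏ i, q (z.2 i)) * f z.2) := by
      exact tsum_congr hcomp
    rw [h2, ← Summable.tsum_mul_tsum hg hf hFz]
    rfl

section Moments

variable (q h : σ → ℝ)

lemma SS_succ {n : ℕ} (ω : Fin (n+1) → σ) :
    SS h (n+1) ω = h (ω 0) + SS h n (fun i => ω i.succ) := by
  simpa [SS] using Fin.sum_univ_succ (fun i => h (ω i))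

variable (hq : Summable q) (hq1 : ∑' x, q x = 1)
  (hsum : ∀ k : ℕ, k ≤ 4 → Summable fun x => q x * h x ^ k)

include hsum in
lemma summable_SS_pow : ∀ (n : ℕ) (k : ℕ), k ≤ 4 →
    Summable (fun ω : Fin n → σ => (∏ i, q (ω i)) * (SS h n ω)^k) := by
  intro n
  induction n with
  | zero => exact fun k hk => Summable.of_finite
  | succ n IH =>
    intro k hk
    have hpt : (fun ω : Fin (n+1) → σ => (∏ i, q (ω i)) * (SS h (n+1) ω)^k)
        = fun ω => ∑ j ∈ Finset.range (k+1), (k.choose j : ℝ) *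
            ((∏ i, q (ω i)) * ((fun x => h x ^ j) (ω 0)
              * (fun ρ => (SS h n ρ)^(k-j)) (fun i => ω i.succ))) := by
      funext ω
      rw [SS_succ, add_pow, Finset.mul_sum]
      exact Finset.sum_congr rfl (fun j hj => by ring)
    rw [hpt]
    apply summable_sum
    intro j hj
    have hj4 : j ≤ 4 := le_trans (Nat.lt_succ_iff.mp (Finset.mem_range.mp hj)) hk
    exact Summable.mul_left _
      (split_aux q (fun x => h x ^ j) (fun ρ => (SS h n ρ)^(k-j))
        (hsum j hj4) (IH (k-j) (le_trans (Nat.sub_le _ _) hk))).1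

include hsum in
lemma expN_SS_succ (n k : ℕ) (hk : k ≤ 4) :
    expN q (n+1) (fun ω => (SS h (n+1) ω)^k)
      = ∑ j ∈ Finset.range (k+1), (k.choose j : ℝ) * (∑' x, q x * h x ^ j)
          * expN q n (fun ρ => (SS h n ρ)^(k-j)) := by
  have hpt : ∀ ω : Fin (n+1) → σ, (∏ i, q (ω i)) * (SS h (n+1) ω)^k
      = ∑ j ∈ Finset.range (k+1), (k.choose j : ℝ) *
          ((∏ i, q (ω i)) * ((fun x => h x ^ j) (ω 0)
            * (fun ρ => (SS h n ρ)^(k-j)) (fun i => ω i.succ))) := by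
    intro ω
    rw [SS_succ, add_pow, Finset.mul_sum]
    exact Finset.sum_congr rfl (fun j hj => by ring)
  have hS : ∀ j ∈ Finset.range (k+1), Summable (fun ω : Fin (n+1) → σ =>
      (k.choose j : ℝ) * ((∏ i, q (ω i)) * ((fun x => h x ^ j) (ω 0)
        * (fun ρ => (SS h n ρ)^(k-j)) (fun i => ω i.succ)))) := by
    intro j hj
    have hj4 : j ≤ 4 := le_trans (Nat.lt_succ_iff.mp (Finset.mem_range.mp hj)) hk
    exact Summable.mul_left _
      (split_aux q (fun x => h x ^ j) (fun ρ => (SS h n ρ)^(k-j))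
        (hsum j hj4) (summable_SS_pow q h hsum n (k-j) (le_trans (Nat.sub_le _ _) hk))).1
  rw [expN, tsum_congr hpt, Summable.tsum_finsetSum hS]
  apply Finset.sum_congr rfl
  intro j hj
  have hj4 : j ≤ 4 := le_trans (Nat.lt_succ_iff.mp (Finset.mem_range.mp hj)) hk
  rw [tsum_mul_left, mul_assoc]
  congr 1
  exact (split_aux q (fun x => h x ^ j) (fun ρ => (SS h n ρ)^(k-j))
      (hsum j hj4) (summable_SS_pow q h hsum n (k-j) (le_trans (Nat.sub_le _ _) hk))).2

end Moments

section Moments2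

variable (q h : σ → ℝ)
variable (hq : Summable q) (hq1 : ∑' x, q x = 1)
  (hsum : ∀ k : ℕ, k ≤ 4 → Summable fun x => q x * h x ^ k)
  (hmean : ∑' x, q x * h x = 0)

include hq in
lemma summable_prod_q : ∀ n : ℕ, Summable (fun ρ : Fin n → σ => ∏ i, q (ρ i)) := by
  intro n
  induction n with
  | zero => exact Summable.of_finite
  | succ n IH =>
    have h1 := (split_aux q (fun _ => 1) (fun _ => (1:ℝ))
      (by simpa using hq) (by simpa using IH)).1
    simpa using h1

include hq hq1 in
lemma expN_const_one : ∀ n : ℕ, expN q n (fun _ => 1) = 1 := by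
  intro n
  induction n with
  | zero => rw [expN_zero]
  | succ n IH =>
    have h2 := (split_aux q (fun _ => 1) (fun _ => (1:ℝ))
      (by simpa using hq) (by simpa using summable_prod_q q hq n)).2
    have h3 : (∑' x, q x * 1) = 1 := by simpa using hq1
    rw [h3, IH, one_mul] at h2
    simpa using h2

include hq hq1 hsum in
lemma expN_SS_pow_zero (n : ℕ) : expN q n (fun ρ => (SS h n ρ)^0) = 1 := by
  simpa using expN_const_one q hq hq1 n

include hq hq1 hsum hmean in
lemma expN_SS_one : ∀ n : ℕ, expN q n (fun ρ => (SS h n ρ)^1) = 0 := by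
  intro n
  induction n with
  | zero => rw [expN_zero]; simp [SS]
  | succ n IH =>
    rw [expN_SS_succ q h hsum n 1 (by norm_num)]
    rw [Finset.sum_range_succ, Finset.sum_range_one]
    simp only [Nat.choose_self, Nat.choose_zero_right, pow_one, Nat.cast_one]
    rw [hmean, IH]
    have h3 : (∑' x, q x * h x ^ 0) = 1 := by simpa using hq1
    rw [h3]
    ring

include hq hq1 hsum hmean in
lemma expN_SS_two : ∀ n : ℕ, expN q n (fun ρ => (SS h n ρ)^2)
    = n * (∑' x, q x * h x ^ 2) := by
  intro n
  induction n with
  | zero => rw [expN_zero]; simp [SS]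
  | succ n IH =>
    rw [expN_SS_succ q h hsum n 2 (by norm_num)]
    rw [Finset.sum_range_succ, Finset.sum_range_succ, Finset.sum_range_one]
    simp only [Nat.choose_self, Nat.choose_zero_right, pow_one, Nat.cast_one]
    rw [hmean, IH, expN_SS_pow_zero q h hq hq1 hsum]
    have h3 : (∑' x, q x * h x ^ 0) = 1 := by simpa using hq1
    rw [h3]
    push_cast
    ring

include hq hq1 hsum hmean in
lemma expN_SS_four : ∀ n : ℕ, expN q n (fun ρ => (SS h n ρ)^4)
    ≤ 3 * (n:ℝ)^2 * (∑' x, q x * h x ^ 2)^2 + n * (∑' x, q x * h x ^ 4) := by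
  intro n
  induction n with
  | zero => rw [expN_zero]; simp [SS]
  | succ n IH =>
    rw [expN_SS_succ q h hsum n 4 (by norm_num)]
    rw [Finset.sum_range_succ, Finset.sum_range_succ, Finset.sum_range_succ,
      Finset.sum_range_succ, Finset.sum_range_one]
    simp only [pow_one]
    rw [hmean, expN_SS_one q h hq hq1 hsum hmean, expN_SS_two q h hq hq1 hsum hmean,
      expN_SS_pow_zero q h hq hq1 hsum]
    have h3 : (∑' x, q x * h x ^ 0) = 1 := by simpa using hq1
    rw [h3]
    have hc : ((Nat.choose 4 2 : ℕ) : ℝ) = 6 := by norm_num [Nat.choose]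
    norm_num [hc]
    push_cast
    nlinarith [sq_nonneg (∑' x, q x * h x ^ 2), Nat.cast_nonneg (α := ℝ) n]

end Moments2

section PW

lemma amgm_aux (a b t : ℝ) (ht : 0 < t) : 2*(a*b) ≤ t*a^2 + b^2/t := by
  rw [← sub_nonneg]
  have h : t*a^2 + b^2/t - 2*(a*b) = (t*a - b)^2/t := by field_simp; ring
  rw [h]; positivity

lemma pointwise_bound (Y Z μ s : ℝ) (hY0 : 0 ≤ Y) (hYZ : Y ≤ Z)
    (hμ0 : 0 ≤ μ) (hμ1 : μ ≤ 1) (hs : 1 ≤ s) :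
    (Y / Z - μ)^2 ≤ (Y - μ*Z)^2 + 3*s*(Y - μ*Z)^4 + 3/s*(Z-1)^2 + 32*(Z-1)^4 := by
  have hZ0 : 0 ≤ Z := le_trans hY0 hYZ
  have hspos : 0 < s := lt_of_lt_of_le one_pos hs
  obtain ⟨D, hD⟩ : ∃ D : ℝ, D = Y - μ*Z := ⟨_, rfl⟩
  obtain ⟨E, hE⟩ : ∃ E : ℝ, E = Z - 1 := ⟨_, rfl⟩
  rw [← hD, ← hE]
  have hD2 : (0:ℝ) ≤ D^2 := sq_nonneg _
  have hD4 : (0:ℝ) ≤ D^4 := by positivity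
  have hE2 : (0:ℝ) ≤ E^2 := sq_nonneg _
  have hE4 : (0:ℝ) ≤ E^4 := by positivity
  rcases le_or_gt (1/2) Z with hZ | hZ
  · have hZpos : 0 < Z := by linarith
    have hdiv : Y / Z - μ = D / Z := by rw [hD]; field_simp
    have h1 : 1 ≤ Z^2*(1 + 6*|E|) := by
      rcases abs_cases E with ⟨h,h'⟩ | ⟨h,h'⟩
      · rw [h, hE]
        have hZ1 : 1 ≤ Z := by rw [hE] at h'; linarith
        nlinarith [mul_nonneg (by linarith : (0:ℝ) ≤ Z - 1)
          (by nlinarith [sq_nonneg Z] : (0:ℝ) ≤ 6*Z^2+Z+1)]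
      · rw [h, hE]
        have hZ1 : Z ≤ 1 := by rw [hE] at h'; linarith
        nlinarith [mul_nonneg (mul_nonneg (by linarith : (0:ℝ) ≤ 1 - Z)
          (by linarith : (0:ℝ) ≤ 3*Z+1)) (by linarith : (0:ℝ) ≤ 2*Z-1)]
    have key : (D/Z)^2 ≤ D^2 + 6*D^2*|E| := by
      rw [div_pow, div_le_iff₀ (by positivity : (0:ℝ) < Z^2)]
      calc D^2 ≤ D^2 * (Z^2*(1+6*|E|)) := le_mul_of_one_le_right hD2 h1
        _ = (D^2 + 6*D^2*|E|) * Z^2 := by ring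
    have amgm : 6*D^2*|E| ≤ 3*s*D^4 + 3/s*E^2 := by
      have h2 := amgm_aux (D^2) (|E|) s hspos
      have h4 : |E|^2 = E^2 := sq_abs E
      rw [h4] at h2
      have h5 : 3/s*E^2 = 3*(E^2/s) := by ring
      have h6 : (D^2)^2 = D^4 := by ring
      rw [h6] at h2
      linarith
    rw [hdiv]
    linarith [key, amgm, hE4]
  · have hfrac1 : Y / Z ≤ 1 := by
      rcases eq_or_lt_of_le hZ0 with h0 | h0
      · rw [← h0]; simp
      · exact div_le_one_of_le₀ hYZ hZ0
    have hfrac0 : 0 ≤ Y / Z := div_nonneg hY0 hZ0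
    have h1 : (Y / Z - μ)^2 ≤ 1 := by nlinarith
    have hE' : E ≤ -(1/2) := by rw [hE]; linarith
    have h2 : 1/4 ≤ E^2 := by nlinarith
    have h3 : (1:ℝ) ≤ 32*E^4 := by nlinarith [h2, sq_nonneg (E^2 - 1/4)]
    have h4 : 0 ≤ 3*s*D^4 := by positivity
    have h5 : 0 ≤ 3/s*E^2 := by positivity
    linarith

end PW
set_option maxHeartbeats 2000000

lemma final_arith (Nr s a2 a4 M2 M4 χ V4 eU4 eV4 : ℝ)
    (hN1 : 1 ≤ Nr) (hs1 : 1 ≤ s) (hss : s*s = Nr)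
    (ha2 : 0 ≤ a2) (ha2M : a2 ≤ M2) (hM2 : M2 = 1 + χ) (ha4M : a4 ≤ M4) (hM40 : 0 ≤ M4)
    (hχ0 : 0 ≤ χ) (hV40 : 0 ≤ V4)
    (hU : eU4 ≤ 3*Nr^2*a2^2 + Nr*a4) (hV : eV4 ≤ 3*Nr^2*χ^2 + Nr*V4) :
    (Nr⁻¹)^2*(Nr*a2) + (3*s*(Nr⁻¹)^4)*eU4 + (3/s*(Nr⁻¹)^2)*(Nr*χ) + (32*(Nr⁻¹)^4)*eV4
      ≤ (1+χ)/Nr + (3*(3*M2^2+M4) + 3*χ + 32*(3*χ^2+V4))*(Nr*s)⁻¹ := by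
  subst hss
  have hs0 : 0 < s := by nlinarith
  have hss1 : (1:ℝ) ≤ s*s := hN1
  have hsspos : (0:ℝ) < s*s := by linarith
  have hM20 : 0 ≤ M2 := by rw [hM2]; linarith
  have f1 : ((s*s)⁻¹)^2*((s*s)*a2) ≤ (1+χ)/(s*s) := by
    have e : ((s*s)⁻¹)^2*((s*s)*a2) = a2/(s*s) := by field_simp
    rw [e]
    gcongr
    linarith
  have hb : eU4 ≤ 3*(s*s)^2*M2^2 + (s*s)^2*M4 := by
    have h1 : a2^2 ≤ M2^2 := by nlinarith [mul_self_le_mul_self ha2 ha2M]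
    have h2 : (s*s)*a4 ≤ (s*s)*M4 := mul_le_mul_of_nonneg_left ha4M (le_of_lt hsspos)
    have h3 : (s*s)*M4 ≤ (s*s)^2*M4 := by nlinarith [mul_nonneg (by nlinarith : (0:ℝ) ≤ (s*s)^2 - s*s) hM40]
    have h4 : 3*(s*s)^2*a2^2 ≤ 3*(s*s)^2*M2^2 :=
      mul_le_mul_of_nonneg_left h1 (by positivity)
    linarith [hU, h2, h3, h4]
  have f2 : (3*s*((s*s)⁻¹)^4)*eU4 ≤ 3*(3*M2^2+M4)*((s*s)*s)⁻¹ := by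
    calc (3*s*((s*s)⁻¹)^4)*eU4 ≤ (3*s*((s*s)⁻¹)^4)*(3*(s*s)^2*M2^2 + (s*s)^2*M4) :=
          mul_le_mul_of_nonneg_left hb (by positivity)
      _ = 3*(3*M2^2+M4)*((s*s)*s)⁻¹ := by field_simp
  have f3 : (3/s*((s*s)⁻¹)^2)*((s*s)*χ) = 3*χ*((s*s)*s)⁻¹ := by field_simp
  have hbV : eV4 ≤ 3*(s*s)^2*χ^2 + (s*s)^2*V4 := by
    have h3 : (s*s)*V4 ≤ (s*s)^2*V4 := by nlinarith [mul_nonneg (by nlinarith : (0:ℝ) ≤ (s*s)^2 - s*s) hV40]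
    linarith [hV, h3]
  have f4 : (32*((s*s)⁻¹)^4)*eV4 ≤ 32*(3*χ^2+V4)*((s*s)*s)⁻¹ := by
    have hinv : ((s*s)^2)⁻¹ ≤ ((s*s)*s)⁻¹ := by
      apply inv_anti₀ (by positivity)
      nlinarith [mul_nonneg (mul_nonneg hs0.le hs0.le) (mul_nonneg hs0.le (by linarith : (0:ℝ) ≤ s - 1))]
    calc (32*((s*s)⁻¹)^4)*eV4 ≤ (32*((s*s)⁻¹)^4)*(3*(s*s)^2*χ^2 + (s*s)^2*V4) :=
          mul_le_mul_of_nonneg_left hbV (by positivity)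
      _ = 32*(3*χ^2+V4)*((s*s)^2)⁻¹ := by field_simp
      _ ≤ 32*(3*χ^2+V4)*((s*s)*s)⁻¹ := by
          apply mul_le_mul_of_nonneg_left hinv (by positivity)
  linarith [f1, f2, f3, f4]

/-- The unnormalized importance sampling estimator
`p̃_N(A)(ω) = (1/N) ∑ₙ (p(ωₙ)/q(ωₙ)) · 1[ωₙ ∈ A]`. -/
def ptildeN (p q : σ → ℝ) (N : ℕ) (A : Set σ) (ω : Fin N → σ) : ℝ :=
  (N : ℝ)⁻¹ * ∑ n, (p (ω n) / q (ω n)) * A.indicator 1 (ω n)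

/-- The self-normalized importance sampling estimator
`p̂_N(A) = p̃_N(A) / p̃_N(Σ*)`. -/
def phatN (p q : σ → ℝ) (N : ℕ) (A : Set σ) (ω : Fin N → σ) : ℝ :=
  ptildeN p q N A ω / ptildeN p q N Set.univ ω

set_option maxHeartbeats 2000000 in
theorem snis_event_level_bound
    [Countable σ] (p q : σ → ℝ)
    (hp0 : ∀ x, 0 ≤ p x) (hp1 : ∑' x, p x = 1)
    (hq0 : ∀ x, 0 ≤ q x) (hq1 : ∑' x, q x = 1)
    (hac : ∀ x, q x = 0 → p x = 0)
    (hW4 : Summable fun x => q x * (p x / q x) ^ 4) :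
    ∃ C : ℝ, ∀ (A : Set σ) (N : ℕ), 1 ≤ N →
      expN q N (fun ω => (phatN p q N A ω - ∑' x, A.indicator p x) ^ 2)
        ≤ (1 + ∑' x, q x * (p x / q x - 1) ^ 2) / N
          + C * ((N : ℝ) ^ (3 / 2 : ℝ))⁻¹ := by
  classical
  have hsumq : Summable q := by
    by_contra hc; rw [tsum_eq_zero_of_not_summable hc] at hq1; exact zero_ne_one hq1
  have hsump : Summable p := by
    by_contra hc; rw [tsum_eq_zero_of_not_summable hc] at hp1; exact zero_ne_one hp1
  have hW0 : ∀ x, 0 ≤ p x / q x := fun x => div_nonneg (hp0 x) (hq0 x)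
  have hqW : ∀ x, q x * (p x / q x) = p x := by
    intro x
    by_cases hx : q x = 0
    · simp [hx, hac x hx]
    · field_simp
  have hdom4 : Summable (fun x => q x * (1 + p x / q x)^4) := by
    apply Summable.of_nonneg_of_le (fun x => mul_nonneg (hq0 x) (by positivity))
      (fun x => ?_) ((hsumq.mul_left 8).add (hW4.mul_left 8))
    have h1 : (1 + p x / q x)^4 ≤ 8*(1 + (p x / q x)^4) := by
      nlinarith [hW0 x, sq_nonneg (p x / q x - 1), sq_nonneg ((p x / q x)^2 - 1),
        sq_nonneg ((p x/q x)^2 - (p x/ q x))]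
    calc q x * (1 + p x / q x)^4 ≤ q x * (8*(1+(p x / q x)^4)) :=
          mul_le_mul_of_nonneg_left h1 (hq0 x)
      _ = 8 * q x + 8 * (q x * (p x / q x)^4) := by ring
  have hks : ∀ (h : σ → ℝ), (∀ x, |h x| ≤ 1 + p x / q x) →
      ∀ k : ℕ, k ≤ 4 → Summable (fun x => q x * h x ^ k) := by
    intro h hh k hk
    rw [← summable_abs_iff]
    apply Summable.of_nonneg_of_le (fun x => abs_nonneg _) (fun x => ?_) hdom4
    rw [abs_mul, abs_pow, abs_of_nonneg (hq0 x)]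
    have h2 : |h x| ^ k ≤ (1 + p x / q x)^k := pow_le_pow_left₀ (abs_nonneg _) (hh x) k
    have h3 : (1 + p x / q x)^k ≤ (1 + p x / q x)^4 :=
      pow_le_pow_right₀ (by linarith [hW0 x]) hk
    exact mul_le_mul_of_nonneg_left (le_trans h2 h3) (hq0 x)
  have hWabs : ∀ x, |p x / q x| ≤ 1 + p x / q x := fun x => by
    rw [abs_of_nonneg (hW0 x)]; linarith [hW0 x]
  have hWsum := hks (fun x => p x / q x) hWabs
  have hVabs : ∀ x, |p x / q x - 1| ≤ 1 + p x / q x := by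
    intro x; rw [abs_le]; constructor <;> nlinarith [hW0 x]
  have hVsum := hks (fun x => p x / q x - 1) hVabs
  have hVmean : ∑' x, q x * (p x / q x - 1) = 0 := by
    have hpt : ∀ x, q x * (p x / q x - 1) = p x - q x := by
      intro x; linear_combination hqW x
    rw [tsum_congr hpt, Summable.tsum_sub hsump hsumq, hp1, hq1, sub_self]
  have hχ0 : 0 ≤ ∑' x, q x * (p x / q x - 1)^2 :=
    tsum_nonneg (fun x => mul_nonneg (hq0 x) (sq_nonneg _))
  have hM4_0 : 0 ≤ ∑' x, q x * (p x / q x)^4 :=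
    tsum_nonneg (fun x => mul_nonneg (hq0 x) (by positivity))
  have hV4_0 : 0 ≤ ∑' x, q x * (p x / q x - 1)^4 :=
    tsum_nonneg (fun x => mul_nonneg (hq0 x) (by positivity))
  have hM2_0 : 0 ≤ ∑' x, q x * (p x / q x)^2 :=
    tsum_nonneg (fun x => mul_nonneg (hq0 x) (by positivity))
  have hM2eq : ∑' x, q x * (p x / q x)^2 = 1 + ∑' x, q x * (p x / q x - 1)^2 := by
    have hpt : ∀ x, q x * (p x / q x)^2 = q x * (p x / q x - 1)^2 + (2 * p x - q x) := by
      intro x; linear_combination 2 * hqW x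
    rw [tsum_congr hpt, Summable.tsum_add (hVsum 2 (by norm_num)) ((hsump.mul_left 2).sub hsumq),
      Summable.tsum_sub (hsump.mul_left 2) hsumq, tsum_mul_left, hp1, hq1]
    ring
  refine ⟨3*(3*(∑' x, q x * (p x / q x)^2)^2 + ∑' x, q x * (p x / q x)^4)
      + 3*(∑' x, q x * (p x / q x - 1)^2)
      + 32*(3*(∑' x, q x * (p x / q x - 1)^2)^2 + ∑' x, q x * (p x / q x - 1)^4), ?_⟩
  intro A N hN
  have hN1 : (1:ℝ) ≤ N := by exact_mod_cast hN
  have hNpos : (0:ℝ) < N := by linarith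
  set s := Real.sqrt N with hsdef
  have hspos : 0 < s := Real.sqrt_pos.mpr hNpos
  have hs1 : 1 ≤ s := by
    rw [hsdef, show (1:ℝ) = Real.sqrt 1 by simp]
    exact Real.sqrt_le_sqrt hN1
  have hss : s * s = N := Real.mul_self_sqrt (le_of_lt hNpos)
  have hsN : s ≤ N := by nlinarith
  have hT : ((N:ℝ) ^ (3/2 : ℝ)) = N * s := by
    rw [show (3/2:ℝ) = 1 + 1/2 by norm_num, Real.rpow_add hNpos, Real.rpow_one,
      hsdef, Real.sqrt_eq_rpow]
  rw [hT]
  set μ := ∑' x, A.indicator p x with hμdef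
  have hindle : ∀ x, A.indicator p x ≤ p x := fun x => by
    by_cases hx : x ∈ A <;> simp [Set.indicator, hx, hp0 x]
  have hindnn : ∀ x, 0 ≤ A.indicator p x := fun x =>
    Set.indicator_nonneg (fun y _ => hp0 y) x
  have hindsum : Summable (A.indicator p) := Summable.of_nonneg_of_le hindnn hindle hsump
  have hμ0 : 0 ≤ μ := tsum_nonneg hindnn
  have hμ1 : μ ≤ 1 := by rw [hμdef, ← hp1]; exact Summable.tsum_le_tsum hindle hindsum hsump
  have hUabs : ∀ x, |p x / q x * (A.indicator 1 x - μ)| ≤ 1 + p x / q x := by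
    intro x
    rw [abs_mul, abs_of_nonneg (hW0 x)]
    have h1 : |A.indicator 1 x - μ| ≤ 1 := by
      rw [abs_le]
      by_cases hx : x ∈ A <;> simp [Set.indicator, hx] <;> constructor <;> linarith
    calc (p x / q x) * |A.indicator 1 x - μ| ≤ (p x / q x) * 1 :=
          mul_le_mul_of_nonneg_left h1 (hW0 x)
      _ ≤ 1 + p x / q x := by linarith [hW0 x]
  have hUsum := hks (fun x => p x / q x * (A.indicator 1 x - μ)) hUabs
  have hUmean : ∑' x, q x * (p x / q x * (A.indicator 1 x - μ)) = 0 := by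
    have hpt : ∀ x, q x * (p x / q x * (A.indicator 1 x - μ))
        = A.indicator p x - μ * p x := by
      intro x
      by_cases hx : x ∈ A
      · simp only [Set.indicator_of_mem hx, Pi.one_apply]
        linear_combination (1 - μ) * hqW x
      · simp only [Set.indicator_of_notMem hx]
        linear_combination (-μ) * hqW x
    rw [tsum_congr hpt, Summable.tsum_sub hindsum (hsump.mul_left μ), tsum_mul_left, hp1, ← hμdef]
    ring
  -- moment comparisons for U
  have hU2nn : 0 ≤ ∑' x, q x * (p x / q x * (A.indicator 1 x - μ))^2 :=
    tsum_nonneg (fun x => mul_nonneg (hq0 x) (sq_nonneg _))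
  have hind_sq : ∀ x, (A.indicator 1 x - μ)^2 ≤ 1 := by
    intro x
    by_cases hx : x ∈ A <;> simp [Set.indicator, hx] <;>
      · rw [abs_le]; exact ⟨by linarith, by linarith⟩
  have hUle2 : ∑' x, q x * (p x / q x * (A.indicator 1 x - μ))^2
      ≤ ∑' x, q x * (p x / q x)^2 := by
    apply Summable.tsum_le_tsum ?_ (hUsum 2 (by norm_num)) (hWsum 2 (by norm_num))
    intro x
    apply mul_le_mul_of_nonneg_left ?_ (hq0 x)
    rw [mul_pow]
    nlinarith [hind_sq x, pow_nonneg (hW0 x) 2, sq_nonneg (A.indicator 1 x - μ)]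
  have hUle4 : ∑' x, q x * (p x / q x * (A.indicator 1 x - μ))^4
      ≤ ∑' x, q x * (p x / q x)^4 := by
    apply Summable.tsum_le_tsum ?_ (hUsum 4 (by norm_num)) (hWsum 4 (by norm_num))
    intro x
    apply mul_le_mul_of_nonneg_left ?_ (hq0 x)
    rw [mul_pow]
    have h1 : (A.indicator 1 x - μ)^4 ≤ 1 := by
      nlinarith [hind_sq x, sq_nonneg (A.indicator 1 x - μ)]
    nlinarith [pow_nonneg (hW0 x) 4, pow_nonneg (sq_nonneg (A.indicator 1 x - μ)) 2]
  have hU4nn : 0 ≤ ∑' x, q x * (p x / q x * (A.indicator 1 x - μ))^4 :=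
    tsum_nonneg (fun x => mul_nonneg (hq0 x) (by positivity))
  -- rewriting D and E as normalized coordinate sums
  have hDS : ∀ ω : Fin N → σ, ptildeN p q N A ω - μ * ptildeN p q N Set.univ ω
      = (N:ℝ)⁻¹ * SS (fun x => p x / q x * (A.indicator 1 x - μ)) N ω := by
    intro ω
    rw [ptildeN, ptildeN, SS]
    simp only [Set.indicator_univ, Pi.one_apply, mul_one]
    rw [show ∀ a b : ℝ, (N:ℝ)⁻¹ * a - μ * ((N:ℝ)⁻¹ * b) = (N:ℝ)⁻¹ * (a - μ*b)
      from fun a b => by ring]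
    congr 1
    rw [Finset.mul_sum, ← Finset.sum_sub_distrib]
    exact Finset.sum_congr rfl (fun i _ => by ring)
  have hES : ∀ ω : Fin N → σ, ptildeN p q N Set.univ ω - 1
      = (N:ℝ)⁻¹ * SS (fun x => p x / q x - 1) N ω := by
    intro ω
    rw [ptildeN, SS]
    simp only [Set.indicator_univ, Pi.one_apply, mul_one]
    rw [Finset.sum_sub_distrib, Finset.sum_const, Finset.card_univ, Fintype.card_fin,
      nsmul_eq_mul, mul_one, mul_sub, inv_mul_cancel₀ (ne_of_gt hNpos)]
  -- nonneg facts about the estimators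
  have hY0 : ∀ ω : Fin N → σ, 0 ≤ ptildeN p q N A ω := by
    intro ω
    rw [ptildeN]
    apply mul_nonneg (by positivity)
    apply Finset.sum_nonneg
    intro i _
    exact mul_nonneg (hW0 _) (Set.indicator_nonneg (fun y _ => zero_le_one) _)
  have hYZ : ∀ ω : Fin N → σ, ptildeN p q N A ω ≤ ptildeN p q N Set.univ ω := by
    intro ω
    rw [ptildeN, ptildeN]
    apply mul_le_mul_of_nonneg_left ?_ (by positivity)
    apply Finset.sum_le_sum
    intro i _
    apply mul_le_mul_of_nonneg_left ?_ (hW0 _)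
    by_cases hx : ω i ∈ A <;> simp [Set.indicator, hx]
  -- the pointwise master inequality
  have master : ∀ ω : Fin N → σ,
      (phatN p q N A ω - μ)^2 ≤
        ((N:ℝ)⁻¹ * SS (fun x => p x / q x * (A.indicator 1 x - μ)) N ω)^2
          + 3*s*((N:ℝ)⁻¹ * SS (fun x => p x / q x * (A.indicator 1 x - μ)) N ω)^4
          + 3/s*((N:ℝ)⁻¹ * SS (fun x => p x / q x - 1) N ω)^2
          + 32*((N:ℝ)⁻¹ * SS (fun x => p x / q x - 1) N ω)^4 := by
    intro ω
    rw [← hDS ω, ← hES ω, phatN]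
    exact pointwise_bound _ _ μ s (hY0 ω) (hYZ ω) hμ0 hμ1 hs1
  -- summabilities over sample space
  have hprod_nn : ∀ ω : Fin N → σ, 0 ≤ ∏ i, q (ω i) :=
    fun ω => Finset.prod_nonneg (fun i _ => hq0 _)
  have sU := summable_SS_pow q (fun x => p x / q x * (A.indicator 1 x - μ)) hUsum N
  have sV := summable_SS_pow q (fun x => p x / q x - 1) hVsum N
  have t1s : Summable (fun ω : Fin N → σ =>
      ((N:ℝ)⁻¹)^2 * ((∏ i, q (ω i)) * (SS (fun x => p x / q x * (A.indicator 1 x - μ)) N ω)^2)) :=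
    (sU 2 (by norm_num)).mul_left _
  have t2s : Summable (fun ω : Fin N → σ =>
      (3*s*((N:ℝ)⁻¹)^4) * ((∏ i, q (ω i)) * (SS (fun x => p x / q x * (A.indicator 1 x - μ)) N ω)^4)) :=
    (sU 4 (by norm_num)).mul_left _
  have t3s : Summable (fun ω : Fin N → σ =>
      (3/s*((N:ℝ)⁻¹)^2) * ((∏ i, q (ω i)) * (SS (fun x => p x / q x - 1) N ω)^2)) :=
    (sV 2 (by norm_num)).mul_left _
  have t4s : Summable (fun ω : Fin N → σ =>
      (32*((N:ℝ)⁻¹)^4) * ((∏ i, q (ω i)) * (SS (fun x => p x / q x - 1) N ω)^4)) :=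
    (sV 4 (by norm_num)).mul_left _
  have hsplit : ∀ ω : Fin N → σ,
      (∏ i, q (ω i)) * (((N:ℝ)⁻¹ * SS (fun x => p x / q x * (A.indicator 1 x - μ)) N ω)^2
          + 3*s*((N:ℝ)⁻¹ * SS (fun x => p x / q x * (A.indicator 1 x - μ)) N ω)^4
          + 3/s*((N:ℝ)⁻¹ * SS (fun x => p x / q x - 1) N ω)^2
          + 32*((N:ℝ)⁻¹ * SS (fun x => p x / q x - 1) N ω)^4)
        = ((N:ℝ)⁻¹)^2 * ((∏ i, q (ω i)) * (SS (fun x => p x / q x * (A.indicator 1 x - μ)) N ω)^2)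
          + (3*s*((N:ℝ)⁻¹)^4) * ((∏ i, q (ω i)) * (SS (fun x => p x / q x * (A.indicator 1 x - μ)) N ω)^4)
          + (3/s*((N:ℝ)⁻¹)^2) * ((∏ i, q (ω i)) * (SS (fun x => p x / q x - 1) N ω)^2)
          + (32*((N:ℝ)⁻¹)^4) * ((∏ i, q (ω i)) * (SS (fun x => p x / q x - 1) N ω)^4) :=
    fun ω => by ring
  have hRs : Summable (fun ω : Fin N → σ =>
      (∏ i, q (ω i)) * (((N:ℝ)⁻¹ * SS (fun x => p x / q x * (A.indicator 1 x - μ)) N ω)^2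
          + 3*s*((N:ℝ)⁻¹ * SS (fun x => p x / q x * (A.indicator 1 x - μ)) N ω)^4
          + 3/s*((N:ℝ)⁻¹ * SS (fun x => p x / q x - 1) N ω)^2
          + 32*((N:ℝ)⁻¹ * SS (fun x => p x / q x - 1) N ω)^4)) :=
    Summable.congr (((t1s.add t2s).add t3s).add t4s) (fun ω => (hsplit ω).symm)
  have hLs : Summable (fun ω : Fin N → σ =>
      (∏ i, q (ω i)) * (phatN p q N A ω - μ)^2) :=
    Summable.of_nonneg_of_le (fun ω => mul_nonneg (hprod_nn ω) (sq_nonneg _))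
      (fun ω => mul_le_mul_of_nonneg_left (master ω) (hprod_nn ω)) hRs
  have step1 : expN q N (fun ω => (phatN p q N A ω - μ)^2)
      ≤ ∑' ω : Fin N → σ, (∏ i, q (ω i)) * (((N:ℝ)⁻¹ * SS (fun x => p x / q x * (A.indicator 1 x - μ)) N ω)^2
          + 3*s*((N:ℝ)⁻¹ * SS (fun x => p x / q x * (A.indicator 1 x - μ)) N ω)^4
          + 3/s*((N:ℝ)⁻¹ * SS (fun x => p x / q x - 1) N ω)^2
          + 32*((N:ℝ)⁻¹ * SS (fun x => p x / q x - 1) N ω)^4) :=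
    Summable.tsum_le_tsum (fun ω => mul_le_mul_of_nonneg_left (master ω) (hprod_nn ω)) hLs hRs
  have step2 : ∑' ω : Fin N → σ, (∏ i, q (ω i)) * (((N:ℝ)⁻¹ * SS (fun x => p x / q x * (A.indicator 1 x - μ)) N ω)^2
          + 3*s*((N:ℝ)⁻¹ * SS (fun x => p x / q x * (A.indicator 1 x - μ)) N ω)^4
          + 3/s*((N:ℝ)⁻¹ * SS (fun x => p x / q x - 1) N ω)^2
          + 32*((N:ℝ)⁻¹ * SS (fun x => p x / q x - 1) N ω)^4)
      = ((N:ℝ)⁻¹)^2 * expN q N (fun ω => (SS (fun x => p x / q x * (A.indicator 1 x - μ)) N ω)^2)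
        + (3*s*((N:ℝ)⁻¹)^4) * expN q N (fun ω => (SS (fun x => p x / q x * (A.indicator 1 x - μ)) N ω)^4)
        + (3/s*((N:ℝ)⁻¹)^2) * expN q N (fun ω => (SS (fun x => p x / q x - 1) N ω)^2)
        + (32*((N:ℝ)⁻¹)^4) * expN q N (fun ω => (SS (fun x => p x / q x - 1) N ω)^4) := by
    rw [tsum_congr hsplit, Summable.tsum_add ((t1s.add t2s).add t3s) t4s,
      Summable.tsum_add (t1s.add t2s) t3s, Summable.tsum_add t1s t2s,
      tsum_mul_left, tsum_mul_left, tsum_mul_left, tsum_mul_left]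
    rfl
  have m2U : expN q N (fun ω => (SS (fun x => p x / q x * (A.indicator 1 x - μ)) N ω)^2)
      = N * ∑' x, q x * (p x / q x * (A.indicator 1 x - μ))^2 := by
    have h := expN_SS_two q (fun x => p x / q x * (A.indicator 1 x - μ)) hsumq hq1 hUsum hUmean N
    simpa using h
  have m4U : expN q N (fun ω => (SS (fun x => p x / q x * (A.indicator 1 x - μ)) N ω)^4)
      ≤ 3*(N:ℝ)^2*(∑' x, q x * (p x / q x * (A.indicator 1 x - μ))^2)^2
        + N * ∑' x, q x * (p x / q x * (A.indicator 1 x - μ))^4 := by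
    have h := expN_SS_four q (fun x => p x / q x * (A.indicator 1 x - μ)) hsumq hq1 hUsum hUmean N
    simpa using h
  have m2V : expN q N (fun ω => (SS (fun x => p x / q x - 1) N ω)^2)
      = N * ∑' x, q x * (p x / q x - 1)^2 := by
    have h := expN_SS_two q (fun x => p x / q x - 1) hsumq hq1 hVsum hVmean N
    simpa using h
  have m4V : expN q N (fun ω => (SS (fun x => p x / q x - 1) N ω)^4)
      ≤ 3*(N:ℝ)^2*(∑' x, q x * (p x / q x - 1)^2)^2
        + N * ∑' x, q x * (p x / q x - 1)^4 := by
    have h := expN_SS_four q (fun x => p x / q x - 1) hsumq hq1 hVsum hVmean N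
    simpa using h
  calc expN q N (fun ω => (phatN p q N A ω - μ)^2)
      ≤ ((N:ℝ)⁻¹)^2 * expN q N (fun ω => (SS (fun x => p x / q x * (A.indicator 1 x - μ)) N ω)^2)
        + (3*s*((N:ℝ)⁻¹)^4) * expN q N (fun ω => (SS (fun x => p x / q x * (A.indicator 1 x - μ)) N ω)^4)
        + (3/s*((N:ℝ)⁻¹)^2) * expN q N (fun ω => (SS (fun x => p x / q x - 1) N ω)^2)
        + (32*((N:ℝ)⁻¹)^4) * expN q N (fun ω => (SS (fun x => p x / q x - 1) N ω)^4) := by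
        rw [← step2]; exact step1
    _ = ((N:ℝ)⁻¹)^2 * ((N:ℝ) * ∑' x, q x * (p x / q x * (A.indicator 1 x - μ))^2)
        + (3*s*((N:ℝ)⁻¹)^4) * expN q N (fun ω => (SS (fun x => p x / q x * (A.indicator 1 x - μ)) N ω)^4)
        + (3/s*((N:ℝ)⁻¹)^2) * ((N:ℝ) * ∑' x, q x * (p x / q x - 1)^2)
        + (32*((N:ℝ)⁻¹)^4) * expN q N (fun ω => (SS (fun x => p x / q x - 1) N ω)^4) := by
        rw [m2U, m2V]
    _ ≤ (1 + ∑' x, q x * (p x / q x - 1)^2) / N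
        + (3*(3*(∑' x, q x * (p x / q x)^2)^2 + ∑' x, q x * (p x / q x)^4)
            + 3*(∑' x, q x * (p x / q x - 1)^2)
            + 32*(3*(∑' x, q x * (p x / q x - 1)^2)^2 + ∑' x, q x * (p x / q x - 1)^4))
          * ((N:ℝ) * s)⁻¹ :=
      final_arith (N:ℝ) s _ _ _ _ _ _ _ _ hN1 hs1 hss hU2nn hUle2 hM2eq hUle4 hM4_0
        hχ0 hV4_0 m4U m4V
end
end

section
/- Assume E_q[W⁴] < ∞. The squared L² bias of the self-normalized importance resampling distribution satisfies ‖p̄_N − p‖₂² = ∑_{x∈Σ*} (p̄_N(x) − p(x))² = O((1 + χ²(p‖q))/N) as N → ∞, with a constant depending only on E_q[W⁴] and χ²(p‖q). -/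
/-!
Statement 4: Assume `E_q[W⁴] < ∞`. The squared L² bias of the self-normalized
resampling (importance) distribution satisfies
`‖p̄_N − p‖₂² = ∑_x (p̄_N(x) − p(x))² = O((1 + χ²(p‖q))/N)` as `N → ∞`, with a
constant depending only on `E_q[W⁴]` and `χ²(p‖q)`.
-/

noncomputable section

open scoped BigOperators

variable {σ : Type*}

/-- The self-normalized (importance resampling) random distribution
`p̂_N(x)(ω) = (∑ₙ W⁽ⁿ⁾ 1[ωₙ = x]) / (∑ₘ W⁽ᵐ⁾)`. -/
def phatPoint (p q : σ → ℝ) (N : ℕ) (x : σ) (ω : Fin N → σ) : ℝ :=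
  (∑ n, (p (ω n) / q (ω n)) * ({x} : Set σ).indicator 1 (ω n))
    / (∑ m, p (ω m) / q (ω m))

/-- `p̄_N(x) = E[p̂_N(x)]`, the expected importance resampling distribution. -/
def pbarN (p q : σ → ℝ) (N : ℕ) (x : σ) : ℝ :=
  expN q N (phatPoint p q N x)

section aux
variable {q : σ → ℝ}

lemma qprod_fact (hq0 : ∀ x, 0 ≤ q x) (hq : Summable q) (hq1 : ∑' x, q x = 1) :
    ∀ N : ℕ, Summable (fun ω : Fin N → σ => ∏ n, q (ω n)) ∧
      (∑' ω : Fin N → σ, ∏ n, q (ω n)) = 1 := by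
  intro N
  induction N with
  | zero =>
    refine ⟨Summable.of_finite, ?_⟩
    rw [tsum_eq_single (default : Fin 0 → σ) (fun b hb => absurd (Subsingleton.elim b default) hb)]
    simp
  | succ N ih =>
    set e := Fin.consEquiv (fun _ : Fin (N + 1) => σ) with he
    have hcomp : ∀ a : σ × (Fin N → σ),
        (∏ n, q ((e a) n)) = q a.1 * ∏ n, q (a.2 n) := by
      rintro ⟨x, ρ⟩
      simp only [he, Fin.consEquiv_apply, Fin.prod_univ_succ, Fin.cons_zero, Fin.cons_succ]
    have hsum2 : Summable (fun a : σ × (Fin N → σ) => q a.1 * ∏ n, q (a.2 n)) :=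
      Summable.mul_of_nonneg (f := q) (g := fun ω : Fin N → σ => ∏ n, q (ω n)) hq ih.1
        (fun x => hq0 x) (fun ρ => Finset.prod_nonneg fun n _ => hq0 _)
    have hsum : Summable (fun ω : Fin (N + 1) → σ => ∏ n, q (ω n)) := by
      rw [← e.summable_iff]
      exact hsum2.congr (fun a => (hcomp a).symm)
    refine ⟨hsum, ?_⟩
    have ht := Equiv.tsum_eq e (fun ω : Fin (N + 1) → σ => ∏ n, q (ω n))
    rw [← ht, tsum_congr hcomp,
      Summable.tsum_prod' (f := fun a : σ × (Fin N → σ) => q a.1 * ∏ n, q (a.2 n)) hsum2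
        (fun x => ih.1.mul_left (q x))]
    calc ∑' x, ∑' ρ : Fin N → σ, q x * ∏ n, q (ρ n)
        = ∑' x, q x * ∑' ρ : Fin N → σ, ∏ n, q (ρ n) := tsum_congr fun x => tsum_mul_left
      _ = 1 := by rw [ih.2]; simpa using hq1

end aux

section aux2
variable {q : σ → ℝ}

lemma expN_eval (hq0 : ∀ x, 0 ≤ q x) (hq : Summable q) (hq1 : ∑' x, q x = 1)
    {g : σ → ℝ} (hg : Summable fun x => |q x * g x|) :
    ∀ N : ℕ, ∀ m : Fin N,
      Summable (fun ω : Fin N → σ => |(∏ n, q (ω n)) * g (ω m)|) ∧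
      ∑' ω : Fin N → σ, (∏ n, q (ω n)) * g (ω m) = ∑' x, q x * g x := by
  intro N
  induction N with
  | zero => exact fun m => m.elim0
  | succ N ih =>
    intro m
    set e := Fin.consEquiv (fun _ : Fin (N + 1) => σ) with he
    have hQsum := (qprod_fact hq0 hq hq1 N).1
    have hQval := (qprod_fact hq0 hq hq1 N).2
    induction m using Fin.cases with
    | zero =>
      have hcomp : ∀ a : σ × (Fin N → σ),
          (∏ n, q ((e a) n)) * g ((e a) 0) = (q a.1 * g a.1) * ∏ n, q (a.2 n) := by
        rintro ⟨x, ρ⟩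
        simp only [he, Fin.consEquiv_apply, Fin.prod_univ_succ, Fin.cons_zero, Fin.cons_succ]
        ring
      have hsum2 : Summable (fun a : σ × (Fin N → σ) => |q a.1 * g a.1| * ∏ n, q (a.2 n)) :=
        Summable.mul_of_nonneg (f := fun x => |q x * g x|)
          (g := fun ω : Fin N → σ => ∏ n, q (ω n)) hg hQsum
          (fun x => abs_nonneg _) (fun ρ => Finset.prod_nonneg fun n _ => hq0 _)
      have habs : ∀ a : σ × (Fin N → σ),
          |q a.1 * g a.1| * (∏ n, q (a.2 n)) = |(q a.1 * g a.1) * ∏ n, q (a.2 n)| := by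
        intro a
        symm
        rw [abs_mul, abs_of_nonneg (Finset.prod_nonneg fun n _ => hq0 (a.2 _))]
      have hsum2' : Summable (fun a : σ × (Fin N → σ) => (q a.1 * g a.1) * ∏ n, q (a.2 n)) :=
        Summable.of_abs (hsum2.congr habs)
      constructor
      · rw [← e.summable_iff]
        refine hsum2.congr fun a => ?_
        simp only [Function.comp_apply]
        rw [habs a, hcomp a]
      · have ht := Equiv.tsum_eq e (fun ω : Fin (N + 1) → σ => (∏ n, q (ω n)) * g (ω 0))
        rw [← ht, tsum_congr hcomp,
          Summable.tsum_prod' (f := fun a : σ × (Fin N → σ) => (q a.1 * g a.1) * ∏ n, q (a.2 n)) hsum2'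
            (fun x => hQsum.mul_left (q x * g x))]
        calc ∑' x, ∑' ρ : Fin N → σ, (q x * g x) * ∏ n, q (ρ n)
            = ∑' x, (q x * g x) * ∑' ρ : Fin N → σ, ∏ n, q (ρ n) :=
              tsum_congr fun x => tsum_mul_left
          _ = ∑' x, q x * g x := by rw [hQval]; simp
    | succ j =>
      have hcomp : ∀ a : σ × (Fin N → σ),
          (∏ n, q ((e a) n)) * g ((e a) j.succ)
            = q a.1 * ((∏ n, q (a.2 n)) * g (a.2 j)) := by
        rintro ⟨x, ρ⟩
        simp only [he, Fin.consEquiv_apply, Fin.prod_univ_succ, Fin.cons_zero, Fin.cons_succ]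
        ring
      have hI := ih j
      have hsum2 : Summable
          (fun a : σ × (Fin N → σ) => q a.1 * |(∏ n, q (a.2 n)) * g (a.2 j)|) :=
        Summable.mul_of_nonneg (f := q)
          (g := fun ρ : Fin N → σ => |(∏ n, q (ρ n)) * g (ρ j)|) hq hI.1
          (fun x => hq0 x) (fun ρ => abs_nonneg _)
      have habs : ∀ a : σ × (Fin N → σ),
          q a.1 * |(∏ n, q (a.2 n)) * g (a.2 j)|
            = |q a.1 * ((∏ n, q (a.2 n)) * g (a.2 j))| := by
        intro a
        symm
        rw [abs_mul, abs_of_nonneg (hq0 _)]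
      have hsum2' : Summable
          (fun a : σ × (Fin N → σ) => q a.1 * ((∏ n, q (a.2 n)) * g (a.2 j))) :=
        Summable.of_abs (hsum2.congr habs)
      constructor
      · rw [← e.summable_iff]
        refine hsum2.congr fun a => ?_
        simp only [Function.comp_apply]
        rw [habs a, hcomp a]
      · have ht := Equiv.tsum_eq e (fun ω : Fin (N + 1) → σ => (∏ n, q (ω n)) * g (ω j.succ))
        rw [← ht, tsum_congr hcomp,
          Summable.tsum_prod' (f := fun a : σ × (Fin N → σ) =>
            q a.1 * ((∏ n, q (a.2 n)) * g (a.2 j))) hsum2'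
            (fun x => (Summable.of_abs hI.1).mul_left (q x))]
        calc ∑' x, ∑' ρ : Fin N → σ, q x * ((∏ n, q (ρ n)) * g (ρ j))
            = ∑' x, q x * ∑' ρ : Fin N → σ, (∏ n, q (ρ n)) * g (ρ j) :=
              tsum_congr fun x => tsum_mul_left
          _ = ∑' x, q x * ∑' y, q y * g y := by rw [hI.2]
          _ = ∑' y, q y * g y := by rw [tsum_mul_right, hq1, one_mul]

end aux2

section aux3
variable {q : σ → ℝ}

lemma expN_pair (hq0 : ∀ x, 0 ≤ q x) (hq : Summable q) (hq1 : ∑' x, q x = 1)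
    {g h : σ → ℝ} (hg : Summable fun x => |q x * g x|) (hh : Summable fun x => |q x * h x|) :
    ∀ N : ℕ, ∀ m n : Fin N, m ≠ n →
      Summable (fun ω : Fin N → σ => |(∏ k, q (ω k)) * (g (ω m) * h (ω n))|) ∧
      ∑' ω : Fin N → σ, (∏ k, q (ω k)) * (g (ω m) * h (ω n))
        = (∑' x, q x * g x) * (∑' x, q x * h x) := by
  intro N
  induction N with
  | zero => exact fun m => m.elim0
  | succ N ih =>
    intro m n hmn
    set e := Fin.consEquiv (fun _ : Fin (N + 1) => σ) with he
    induction m using Fin.cases with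
    | zero =>
      induction n using Fin.cases with
      | zero => exact absurd rfl hmn
      | succ j =>
        have hIh := expN_eval hq0 hq hq1 hh N j
        have hcomp : ∀ a : σ × (Fin N → σ),
            (∏ k, q ((e a) k)) * (g ((e a) 0) * h ((e a) j.succ))
              = (q a.1 * g a.1) * ((∏ k, q (a.2 k)) * h (a.2 j)) := by
          rintro ⟨x, ρ⟩
          simp only [he, Fin.consEquiv_apply, Fin.prod_univ_succ, Fin.cons_zero, Fin.cons_succ]
          ring
        have hsum2 : Summable (fun a : σ × (Fin N → σ) =>
            |q a.1 * g a.1| * |(∏ k, q (a.2 k)) * h (a.2 j)|) :=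
          Summable.mul_of_nonneg (f := fun x => |q x * g x|)
            (g := fun ρ : Fin N → σ => |(∏ k, q (ρ k)) * h (ρ j)|) hg hIh.1
            (fun x => abs_nonneg _) (fun ρ => abs_nonneg _)
        have habs : ∀ a : σ × (Fin N → σ),
            |q a.1 * g a.1| * |(∏ k, q (a.2 k)) * h (a.2 j)|
              = |(q a.1 * g a.1) * ((∏ k, q (a.2 k)) * h (a.2 j))| := fun a => (abs_mul _ _).symm
        have hsum2' : Summable (fun a : σ × (Fin N → σ) =>
            (q a.1 * g a.1) * ((∏ k, q (a.2 k)) * h (a.2 j))) :=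
          Summable.of_abs (hsum2.congr habs)
        constructor
        · rw [← e.summable_iff]
          refine hsum2.congr fun a => ?_
          simp only [Function.comp_apply]
          rw [habs a, hcomp a]
        · have ht := Equiv.tsum_eq e
            (fun ω : Fin (N + 1) → σ => (∏ k, q (ω k)) * (g (ω 0) * h (ω j.succ)))
          rw [← ht, tsum_congr hcomp,
            Summable.tsum_prod' (f := fun a : σ × (Fin N → σ) =>
              (q a.1 * g a.1) * ((∏ k, q (a.2 k)) * h (a.2 j))) hsum2'
              (fun x => (Summable.of_abs hIh.1).mul_left (q x * g x))]
          calc ∑' x, ∑' ρ : Fin N → σ, (q x * g x) * ((∏ k, q (ρ k)) * h (ρ j))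
              = ∑' x, (q x * g x) * ∑' ρ : Fin N → σ, (∏ k, q (ρ k)) * h (ρ j) :=
                tsum_congr fun x => tsum_mul_left
            _ = ∑' x, (q x * g x) * ∑' y, q y * h y := by rw [hIh.2]
            _ = (∑' x, q x * g x) * (∑' y, q y * h y) := tsum_mul_right
    | succ i =>
        induction n using Fin.cases with
        | zero =>
          have hIg := expN_eval hq0 hq hq1 hg N i
          have hcomp : ∀ a : σ × (Fin N → σ),
              (∏ k, q ((e a) k)) * (g ((e a) i.succ) * h ((e a) 0))
                = (q a.1 * h a.1) * ((∏ k, q (a.2 k)) * g (a.2 i)) := by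
            rintro ⟨x, ρ⟩
            simp only [he, Fin.consEquiv_apply, Fin.prod_univ_succ, Fin.cons_zero, Fin.cons_succ]
            ring
          have hsum2 : Summable (fun a : σ × (Fin N → σ) =>
              |q a.1 * h a.1| * |(∏ k, q (a.2 k)) * g (a.2 i)|) :=
            Summable.mul_of_nonneg (f := fun x => |q x * h x|)
              (g := fun ρ : Fin N → σ => |(∏ k, q (ρ k)) * g (ρ i)|) hh hIg.1
              (fun x => abs_nonneg _) (fun ρ => abs_nonneg _)
          have habs : ∀ a : σ × (Fin N → σ),
              |q a.1 * h a.1| * |(∏ k, q (a.2 k)) * g (a.2 i)|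
                = |(q a.1 * h a.1) * ((∏ k, q (a.2 k)) * g (a.2 i))| := fun a => (abs_mul _ _).symm
          have hsum2' : Summable (fun a : σ × (Fin N → σ) =>
              (q a.1 * h a.1) * ((∏ k, q (a.2 k)) * g (a.2 i))) :=
            Summable.of_abs (hsum2.congr habs)
          constructor
          · rw [← e.summable_iff]
            refine hsum2.congr fun a => ?_
            simp only [Function.comp_apply]
            rw [habs a, hcomp a]
          · have ht := Equiv.tsum_eq e
              (fun ω : Fin (N + 1) → σ => (∏ k, q (ω k)) * (g (ω i.succ) * h (ω 0)))
            rw [← ht, tsum_congr hcomp,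
              Summable.tsum_prod' (f := fun a : σ × (Fin N → σ) =>
                (q a.1 * h a.1) * ((∏ k, q (a.2 k)) * g (a.2 i))) hsum2'
                (fun x => (Summable.of_abs hIg.1).mul_left (q x * h x))]
            calc ∑' x, ∑' ρ : Fin N → σ, (q x * h x) * ((∏ k, q (ρ k)) * g (ρ i))
                = ∑' x, (q x * h x) * ∑' ρ : Fin N → σ, (∏ k, q (ρ k)) * g (ρ i) :=
                  tsum_congr fun x => tsum_mul_left
              _ = ∑' x, (q x * h x) * ∑' y, q y * g y := by rw [hIg.2]
              _ = (∑' y, q y * g y) * (∑' x, q x * h x) := by rw [tsum_mul_right]; ring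
        | succ j =>
          have hij : i ≠ j := fun hij => hmn (by rw [hij])
          have hI := ih i j hij
          have hcomp : ∀ a : σ × (Fin N → σ),
              (∏ k, q ((e a) k)) * (g ((e a) i.succ) * h ((e a) j.succ))
                = q a.1 * ((∏ k, q (a.2 k)) * (g (a.2 i) * h (a.2 j))) := by
            rintro ⟨x, ρ⟩
            simp only [he, Fin.consEquiv_apply, Fin.prod_univ_succ, Fin.cons_zero, Fin.cons_succ]
            ring
          have hsum2 : Summable (fun a : σ × (Fin N → σ) =>
              q a.1 * |(∏ k, q (a.2 k)) * (g (a.2 i) * h (a.2 j))|) :=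
            Summable.mul_of_nonneg (f := q)
              (g := fun ρ : Fin N → σ => |(∏ k, q (ρ k)) * (g (ρ i) * h (ρ j))|) hq hI.1
              (fun x => hq0 x) (fun ρ => abs_nonneg _)
          have habs : ∀ a : σ × (Fin N → σ),
              q a.1 * |(∏ k, q (a.2 k)) * (g (a.2 i) * h (a.2 j))|
                = |q a.1 * ((∏ k, q (a.2 k)) * (g (a.2 i) * h (a.2 j)))| := by
            intro a
            symm
            rw [abs_mul, abs_of_nonneg (hq0 _)]
          have hsum2' : Summable (fun a : σ × (Fin N → σ) =>
              q a.1 * ((∏ k, q (a.2 k)) * (g (a.2 i) * h (a.2 j)))) :=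
            Summable.of_abs (hsum2.congr habs)
          constructor
          · rw [← e.summable_iff]
            refine hsum2.congr fun a => ?_
            simp only [Function.comp_apply]
            rw [habs a, hcomp a]
          · have ht := Equiv.tsum_eq e
              (fun ω : Fin (N + 1) → σ => (∏ k, q (ω k)) * (g (ω i.succ) * h (ω j.succ)))
            rw [← ht, tsum_congr hcomp,
              Summable.tsum_prod' (f := fun a : σ × (Fin N → σ) =>
                q a.1 * ((∏ k, q (a.2 k)) * (g (a.2 i) * h (a.2 j)))) hsum2'
                (fun x => (Summable.of_abs hI.1).mul_left (q x))]
            calc ∑' x, ∑' ρ : Fin N → σ, q x * ((∏ k, q (ρ k)) * (g (ρ i) * h (ρ j)))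
                = ∑' x, q x * ∑' ρ : Fin N → σ, (∏ k, q (ρ k)) * (g (ρ i) * h (ρ j)) :=
                  tsum_congr fun x => tsum_mul_left
              _ = ∑' x, q x * ((∑' y, q y * g y) * (∑' y, q y * h y)) := by rw [hI.2]
              _ = (∑' y, q y * g y) * (∑' y, q y * h y) := by
                  rw [tsum_mul_right, hq1, one_mul]

end aux3

lemma tsum_cauchy_schwarz {α : Type*} {F G : α → ℝ}
    (hF0 : ∀ a, 0 ≤ F a) (hG0 : ∀ a, 0 ≤ G a)
    (hF : Summable fun a => F a ^ 2) (hG : Summable fun a => G a ^ 2) :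
    (∑' a, F a * G a) ^ 2 ≤ (∑' a, F a ^ 2) * (∑' a, G a ^ 2) := by
  have hFG : Summable fun a => F a * G a := by
    refine Summable.of_nonneg_of_le (fun a => mul_nonneg (hF0 a) (hG0 a))
      (fun a => ?_) ((hF.add hG).div_const 2)
    nlinarith [sq_nonneg (F a - G a)]
  set A := ∑' a, F a ^ 2 with hA
  set B := ∑' a, G a ^ 2 with hB
  have hA0 : 0 ≤ A := tsum_nonneg fun a => sq_nonneg _
  have hB0 : 0 ≤ B := tsum_nonneg fun a => sq_nonneg _
  have key : ∀ s : Finset α, ∑ a ∈ s, F a * G a ≤ Real.sqrt (A * B) := by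
    intro s
    have h1 := Finset.sum_mul_sq_le_sq_mul_sq s F G
    have h2 : ∑ a ∈ s, F a ^ 2 ≤ A := Summable.sum_le_tsum s (fun a _ => sq_nonneg _) hF
    have h3 : ∑ a ∈ s, G a ^ 2 ≤ B := Summable.sum_le_tsum s (fun a _ => sq_nonneg _) hG
    have h4 : (∑ a ∈ s, F a * G a) ^ 2 ≤ A * B := by
      refine h1.trans (mul_le_mul h2 h3 (Finset.sum_nonneg fun a _ => sq_nonneg _) hA0)
    have h5 : 0 ≤ ∑ a ∈ s, F a * G a :=
      Finset.sum_nonneg fun a _ => mul_nonneg (hF0 a) (hG0 a)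
    exact (Real.le_sqrt h5 (mul_nonneg hA0 hB0)).mpr h4
  have h6 : ∑' a, F a * G a ≤ Real.sqrt (A * B) := Summable.tsum_le_of_sum_le hFG key
  have h7 : 0 ≤ ∑' a, F a * G a := tsum_nonneg fun a => mul_nonneg (hF0 a) (hG0 a)
  calc (∑' a, F a * G a) ^ 2 ≤ Real.sqrt (A * B) ^ 2 := by
        exact pow_le_pow_left₀ h7 h6 2
    _ = A * B := Real.sq_sqrt (mul_nonneg hA0 hB0)

-- helper: x ≤ sqrt y when x² ≤ y and x ≥ 0



theorem sir_L2_bias_squared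
    [Countable σ] (p q : σ → ℝ)
    (hp0 : ∀ x, 0 ≤ p x) (hp1 : ∑' x, p x = 1)
    (hq0 : ∀ x, 0 ≤ q x) (hq1 : ∑' x, q x = 1)
    (hac : ∀ x, q x = 0 → p x = 0)
    (hW4 : Summable fun x => q x * (p x / q x) ^ 4) :
    ∃ C : ℝ, 0 < C ∧ ∃ N₀ : ℕ, ∀ N : ℕ, N₀ ≤ N →
      ∑' x : σ, (pbarN p q N x - p x) ^ 2
        ≤ C * ((1 + ∑' y, q y * (p y / q y - 1) ^ 2) / N) := by
  classical
  have hqsum : Summable q := by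
    by_contra hc
    rw [tsum_eq_zero_of_not_summable hc] at hq1; norm_num at hq1
  have hpsum : Summable p := by
    by_contra hc
    rw [tsum_eq_zero_of_not_summable hc] at hp1; norm_num at hp1
  set W : σ → ℝ := fun x => p x / q x with hW
  have hW0 : ∀ x, 0 ≤ W x := fun x => div_nonneg (hp0 x) (hq0 x)
  have hqW : ∀ x, q x * W x = p x := by
    intro x
    by_cases hx : q x = 0
    · simp [hW, hx, hac x hx]
    · simp only [hW]; field_simp
  have hqW2sum : Summable fun x => q x * W x ^ 2 := by
    refine Summable.of_nonneg_of_le (fun x => mul_nonneg (hq0 x) (sq_nonneg _))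
      (fun x => ?_) (hqsum.add hW4)
    have h1 : W x ^ 2 ≤ 1 + W x ^ 4 := by nlinarith [sq_nonneg (W x ^ 2 - 1), sq_nonneg (W x)]
    calc q x * W x ^ 2 ≤ q x * (1 + W x ^ 4) := mul_le_mul_of_nonneg_left h1 (hq0 x)
      _ = q x + q x * W x ^ 4 := by ring
  set u : σ → ℝ := fun y => 1 - W y with hu
  have hqu : ∀ x, q x * u x = q x - p x := by
    intro x
    simp only [hu]
    rw [mul_sub, mul_one, hqW x]
  have hqu_abs : Summable fun x => |q x * u x| :=
    ((hqsum.sub hpsum).abs).congr fun x => congrArg abs (hqu x).symm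
  have hquu_abs : Summable fun x => |q x * (u x * u x)| := by
    refine Summable.of_nonneg_of_le (fun x => abs_nonneg _) (fun x => ?_)
      ((hqsum.mul_left 2).add (hqW2sum.mul_left 2))
    rw [abs_of_nonneg (mul_nonneg (hq0 x) (mul_self_nonneg _))]
    simp only [hu]
    nlinarith [mul_nonneg (hq0 x) (sq_nonneg (1 + W x)), hq0 x]
  have hqu_val : ∑' y, q y * u y = 0 := by
    rw [tsum_congr hqu, Summable.tsum_sub hqsum hpsum, hq1, hp1, sub_self]
  set χ : ℝ := ∑' y, q y * (W y - 1) ^ 2 with hχ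
  have hχ0 : 0 ≤ χ := tsum_nonneg fun y => mul_nonneg (hq0 y) (sq_nonneg _)
  have hquu_val : ∑' y, q y * (u y * u y) = χ := by
    rw [hχ]
    refine tsum_congr fun y => ?_
    simp only [hu]; ring
  have hind_val : ∀ x y : σ, ({x} : Set σ).indicator (1 : σ → ℝ) y = if y = x then 1 else 0 := by
    intro x y
    simp [Set.indicator_apply]
  have hind_abs : ∀ x : σ, Summable fun y => |q y * (W y * ({x} : Set σ).indicator 1 y)| := by
    intro x
    refine Summable.of_nonneg_of_le (fun y => abs_nonneg _) (fun y => ?_) hpsum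
    rw [hind_val x y]
    split_ifs with hyx
    · rw [mul_one, abs_of_nonneg (mul_nonneg (hq0 y) (hW0 y)), hqW y]
    · simp [hp0 y]
  refine ⟨1, one_pos, 1, fun N hN => ?_⟩
  have hN1 : (1:ℝ) ≤ (N:ℝ) := by exact_mod_cast hN
  have hNpos : (0:ℝ) < (N:ℝ) := lt_of_lt_of_le one_pos hN1
  have hNne : (N:ℝ) ≠ 0 := ne_of_gt hNpos
  set Q : (Fin N → σ) → ℝ := fun ω => ∏ n, q (ω n) with hQdef
  set S : (Fin N → σ) → ℝ := fun ω => ∑ n, W (ω n) with hSdef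
  set T : σ → (Fin N → σ) → ℝ :=
    fun x ω => ∑ n, W (ω n) * ({x} : Set σ).indicator 1 (ω n) with hTdef
  have hQ0 : ∀ ω, 0 ≤ Q ω := fun ω => Finset.prod_nonneg fun n _ => hq0 _
  have hS0 : ∀ ω, 0 ≤ S ω := fun ω => Finset.sum_nonneg fun n _ => hW0 _
  have hT0 : ∀ x ω, 0 ≤ T x ω := fun x ω =>
    Finset.sum_nonneg fun n _ => mul_nonneg (hW0 _) (by rw [hind_val]; split_ifs <;> norm_num)
  have hTS : ∀ x ω, T x ω ≤ S ω := by
    intro x ω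
    refine Finset.sum_le_sum fun n _ => ?_
    rw [hind_val]
    split_ifs <;> simp [hW0 (ω n)]
  have hfrac0 : ∀ x ω, 0 ≤ T x ω / S ω := fun x ω => div_nonneg (hT0 x ω) (hS0 ω)
  have hfrac1 : ∀ x ω, T x ω / S ω ≤ 1 := by
    intro x ω
    rcases eq_or_lt_of_le (hS0 ω) with hS | hS
    · rw [← hS, div_zero]; norm_num
    · exact (div_le_one hS).mpr (hTS x ω)
  have hQprod := qprod_fact hq0 hqsum hq1 N
  have hphat : ∀ x ω, phatPoint p q N x ω = T x ω / S ω := by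
    intro x ω
    simp only [phatPoint, hTdef, hSdef, hW]
  -- ∑' ω, Q ω * T x ω = N * p x
  have hg_single : ∀ x : σ, (∑' y, q y * (W y * ({x} : Set σ).indicator 1 y)) = p x := by
    intro x
    rw [tsum_eq_single x (fun y hyx => by rw [hind_val x y, if_neg hyx]; ring)]
    rw [hind_val x x, if_pos rfl, mul_one, hqW x]
  have hQT_sum : ∀ x, Summable fun ω => Q ω * T x ω := by
    intro x
    have h1 : Summable fun ω : Fin N → σ =>
        ∑ n, Q ω * (W (ω n) * ({x} : Set σ).indicator 1 (ω n)) :=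
      summable_sum fun n _ => ((expN_eval hq0 hqsum hq1 (hind_abs x) N n).1).of_abs
    exact h1.congr fun ω => by rw [← Finset.mul_sum]
  have hQT_val : ∀ x, ∑' ω, Q ω * T x ω = N * p x := by
    intro x
    have h1 : ∀ ω : Fin N → σ, Q ω * T x ω
        = ∑ n, Q ω * (W (ω n) * ({x} : Set σ).indicator 1 (ω n)) := by
      intro ω; rw [← Finset.mul_sum]
    rw [tsum_congr h1, Summable.tsum_finsetSum fun n _ => ((expN_eval hq0 hqsum hq1 (hind_abs x) N n).1).of_abs]
    have h2 : ∀ n : Fin N, ∑' ω : Fin N → σ, Q ω * (W (ω n) * ({x} : Set σ).indicator 1 (ω n))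
        = p x := fun n => by
      rw [(expN_eval hq0 hqsum hq1 (hind_abs x) N n).2, hg_single x]
    rw [Finset.sum_congr rfl fun n _ => h2 n]
    simp [Finset.sum_const, mul_comm]
  have hQTS_sum : ∀ x, Summable fun ω => Q ω * (T x ω / S ω) := by
    intro x
    refine Summable.of_nonneg_of_le (fun ω => mul_nonneg (hQ0 ω) (hfrac0 x ω))
      (fun ω => ?_) hQprod.1
    exact mul_le_of_le_one_right (hQ0 ω) (hfrac1 x ω)
  have hbias : ∀ x, pbarN p q N x - p x
      = ∑' ω, Q ω * ((T x ω / S ω) * (((N:ℝ) - S ω) / N)) := by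
    intro x
    have h0 : pbarN p q N x = ∑' ω, Q ω * (T x ω / S ω) := by
      rw [pbarN, expN]
      exact tsum_congr fun ω => by rw [hphat x ω]
    have h1 : p x = ∑' ω, Q ω * T x ω / N := by
      rw [tsum_div_const, hQT_val x, mul_comm, mul_div_assoc, div_self hNne, mul_one]
    rw [h0, h1, ← Summable.tsum_sub (hQTS_sum x) ((hQT_sum x).div_const N)]
    refine tsum_congr fun ω => ?_
    rcases eq_or_lt_of_le (hS0 ω) with hS | hS
    · have hT : T x ω = 0 :=
        le_antisymm (le_trans (hTS x ω) (le_of_eq hS.symm)) (hT0 x ω)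
      rw [hT, ← hS]
      simp
    · have hSne : S ω ≠ 0 := ne_of_gt hS
      field_simp
  -- second moment: ∑' ω, Q ω * ((N - S ω)^2) = N * χ
  have hNS : ∀ ω, (N:ℝ) - S ω = ∑ n, u (ω n) := by
    intro ω
    simp only [hu, hSdef]
    rw [Finset.sum_sub_distrib]
    simp
  have hterm : ∀ m n : Fin N, (Summable fun ω => Q ω * (u (ω m) * u (ω n))) ∧
      ∑' ω, Q ω * (u (ω m) * u (ω n)) = if m = n then χ else 0 := by
    intro m n
    by_cases hmn : m = n
    · subst hmn
      have h := expN_eval hq0 hqsum hq1 (g := fun y => u y * u y) hquu_abs N m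
      exact ⟨h.1.of_abs, by rw [if_pos rfl, h.2, hquu_val]⟩
    · have h := expN_pair hq0 hqsum hq1 hqu_abs hqu_abs N m n hmn
      exact ⟨h.1.of_abs, by rw [if_neg hmn, h.2, hqu_val, mul_zero]⟩
  have hQD_expand : ∀ ω, Q ω * ((N:ℝ) - S ω) ^ 2
      = ∑ m, ∑ n, Q ω * (u (ω m) * u (ω n)) := by
    intro ω
    rw [hNS ω, sq, Finset.sum_mul_sum]
    rw [Finset.mul_sum]
    refine Finset.sum_congr rfl fun m _ => ?_
    rw [Finset.mul_sum]
  have hQD_sum : Summable fun ω => Q ω * ((N:ℝ) - S ω) ^ 2 := by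
    have h1 : Summable fun ω : Fin N → σ => ∑ m, ∑ n, Q ω * (u (ω m) * u (ω n)) :=
      summable_sum fun m _ => summable_sum fun n _ => (hterm m n).1
    exact h1.congr fun ω => (hQD_expand ω).symm
  have hQD_val : ∑' ω, Q ω * ((N:ℝ) - S ω) ^ 2 = N * χ := by
    rw [tsum_congr hQD_expand,
      Summable.tsum_finsetSum fun m _ => summable_sum fun n _ => (hterm m n).1]
    have h1 : ∀ m : Fin N, ∑' ω : Fin N → σ, ∑ n, Q ω * (u (ω m) * u (ω n))
        = ∑ n, ∑' ω : Fin N → σ, Q ω * (u (ω m) * u (ω n)) :=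
      fun m => Summable.tsum_finsetSum fun n _ => (hterm m n).1
    rw [Finset.sum_congr rfl fun m _ => h1 m]
    have h2 : ∀ m : Fin N, ∑ n, ∑' ω : Fin N → σ, Q ω * (u (ω m) * u (ω n)) = χ := by
      intro m
      rw [Finset.sum_congr rfl fun n _ => (hterm m n).2, Finset.sum_ite_eq]
      simp
    rw [Finset.sum_congr rfl fun m _ => h2 m]
    simp [mul_comm]
  have hQDx_sum : ∀ x, Summable fun ω => Q ω * ((T x ω / S ω) * ((N:ℝ) - S ω) ^ 2) := by
    intro x
    refine Summable.of_nonneg_of_le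
      (fun ω => mul_nonneg (hQ0 ω) (mul_nonneg (hfrac0 x ω) (sq_nonneg _)))
      (fun ω => ?_) hQD_sum
    refine mul_le_mul_of_nonneg_left ?_ (hQ0 ω)
    exact mul_le_of_le_one_left (sq_nonneg _) (hfrac1 x ω)
  set B : σ → ℝ := fun x => ∑' ω, Q ω * ((T x ω / S ω) * ((N:ℝ) - S ω) ^ 2) with hBdef
  have hB0 : ∀ x, 0 ≤ B x := fun x =>
    tsum_nonneg fun ω => mul_nonneg (hQ0 ω) (mul_nonneg (hfrac0 x ω) (sq_nonneg _))
  -- per-x Cauchy-Schwarz bound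
  have hperx : ∀ x, (pbarN p q N x - p x) ^ 2 ≤ B x / (N:ℝ) ^ 2 := by
    intro x
    set F : (Fin N → σ) → ℝ := fun ω => Real.sqrt (Q ω * (T x ω / S ω)) with hFdef
    set G : (Fin N → σ) → ℝ := fun ω => F ω * |(N:ℝ) - S ω| with hGdef
    have hQTS0 : ∀ ω, 0 ≤ Q ω * (T x ω / S ω) :=
      fun ω => mul_nonneg (hQ0 ω) (hfrac0 x ω)
    have hF2 : ∀ ω, F ω ^ 2 = Q ω * (T x ω / S ω) := by
      intro ω; rw [hFdef]; exact Real.sq_sqrt (hQTS0 ω)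
    have hG2 : ∀ ω, G ω ^ 2 = Q ω * ((T x ω / S ω) * ((N:ℝ) - S ω) ^ 2) := by
      intro ω
      rw [hGdef]
      rw [mul_pow, hF2 ω, sq_abs]
      ring
    have hFG : ∀ ω, F ω * G ω = Q ω * (T x ω / S ω) * |(N:ℝ) - S ω| := by
      intro ω
      rw [hGdef, ← mul_assoc, ← sq, hF2 ω]
    have hF0 : ∀ ω, 0 ≤ F ω := fun ω => Real.sqrt_nonneg _
    have hG0 : ∀ ω, 0 ≤ G ω := fun ω => mul_nonneg (hF0 ω) (abs_nonneg _)
    have hsumF2 : Summable fun ω => F ω ^ 2 := (hQTS_sum x).congr fun ω => (hF2 ω).symm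
    have hsumG2 : Summable fun ω => G ω ^ 2 := (hQDx_sum x).congr fun ω => (hG2 ω).symm
    have hCS := tsum_cauchy_schwarz hF0 hG0 hsumF2 hsumG2
    have hA1 : ∑' ω, F ω ^ 2 ≤ 1 := by
      rw [tsum_congr hF2]
      calc ∑' ω, Q ω * (T x ω / S ω) ≤ ∑' ω, Q ω := by
            refine Summable.tsum_le_tsum (fun ω => ?_) (hQTS_sum x) hQprod.1
            exact mul_le_of_le_one_right (hQ0 ω) (hfrac1 x ω)
        _ = 1 := hQprod.2
    have hBx : ∑' ω, G ω ^ 2 = B x := by rw [tsum_congr hG2, hBdef]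
    -- bias in terms of F * G
    have habsle : ∀ ω, |Q ω * ((T x ω / S ω) * (((N:ℝ) - S ω) / N))| = F ω * G ω / N := by
      intro ω
      rw [hFG ω, abs_mul, abs_mul, abs_of_nonneg (hQ0 ω), abs_of_nonneg (hfrac0 x ω), abs_div,
        abs_of_nonneg (le_of_lt hNpos)]
      ring
    have hsumFG : Summable fun ω => F ω * G ω := by
      refine Summable.of_nonneg_of_le (fun ω => mul_nonneg (hF0 ω) (hG0 ω)) (fun ω => ?_)
        ((hsumF2.add hsumG2).div_const 2)
      nlinarith [sq_nonneg (F ω - G ω)]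
    have hsumbias : Summable fun ω => Q ω * ((T x ω / S ω) * (((N:ℝ) - S ω) / N)) := by
      refine Summable.of_abs ?_
      refine (hsumFG.div_const N).congr fun ω => ?_
      rw [habsle ω]
    have hb1 : |pbarN p q N x - p x| ≤ (∑' ω, F ω * G ω) / N := by
      rw [hbias x]
      calc |∑' ω, Q ω * ((T x ω / S ω) * (((N:ℝ) - S ω) / N))|
          ≤ ∑' ω, |Q ω * ((T x ω / S ω) * (((N:ℝ) - S ω) / N))| := by
            have := norm_tsum_le_tsum_norm (f := fun ω : Fin N → σ =>
              Q ω * ((T x ω / S ω) * (((N:ℝ) - S ω) / N))) ?_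
            · simp only [Real.norm_eq_abs] at this
              exact this
            · refine ((hsumFG.div_const N).congr fun ω => ?_)
              rw [Real.norm_eq_abs, habsle ω]
        _ = ∑' ω, F ω * G ω / N := tsum_congr habsle
        _ = (∑' ω, F ω * G ω) / N := tsum_div_const
    calc (pbarN p q N x - p x) ^ 2 = |pbarN p q N x - p x| ^ 2 := (sq_abs _).symm
      _ ≤ ((∑' ω, F ω * G ω) / N) ^ 2 := by
          refine pow_le_pow_left₀ (abs_nonneg _) hb1 2
      _ = (∑' ω, F ω * G ω) ^ 2 / (N:ℝ) ^ 2 := by rw [div_pow]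
      _ ≤ (∑' ω, F ω ^ 2) * (∑' ω, G ω ^ 2) / (N:ℝ) ^ 2 := by
          exact div_le_div_of_nonneg_right hCS (by positivity)
      _ ≤ B x / (N:ℝ) ^ 2 := by
          rw [hBx]
          refine div_le_div_of_nonneg_right ?_ (by positivity)
          calc (∑' ω, F ω ^ 2) * B x ≤ 1 * B x := by
                refine mul_le_mul_of_nonneg_right hA1 ?_
                rw [← hBx]; exact tsum_nonneg fun ω => sq_nonneg _
            _ = B x := one_mul _
  -- partial sums of B bounded by N * χ
  have hBpartial : ∀ s : Finset σ, ∑ x ∈ s, B x ≤ (N:ℝ) * χ := by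
    intro s
    have h1 : ∑ x ∈ s, B x
        = ∑' ω : Fin N → σ, ∑ x ∈ s, Q ω * ((T x ω / S ω) * ((N:ℝ) - S ω) ^ 2) := by
      rw [hBdef]
      exact (Summable.tsum_finsetSum fun x _ => hQDx_sum x).symm
    rw [h1]
    have hle : ∀ ω, ∑ x ∈ s, Q ω * ((T x ω / S ω) * ((N:ℝ) - S ω) ^ 2)
        ≤ Q ω * ((N:ℝ) - S ω) ^ 2 := by
      intro ω
      have h2 : ∑ x ∈ s, Q ω * ((T x ω / S ω) * ((N:ℝ) - S ω) ^ 2)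
          = (∑ x ∈ s, T x ω / S ω) * (Q ω * ((N:ℝ) - S ω) ^ 2) := by
        rw [Finset.sum_mul]
        exact Finset.sum_congr rfl fun x _ => by ring
      rw [h2]
      have h3 : ∑ x ∈ s, T x ω / S ω ≤ 1 := by
        rw [← Finset.sum_div]
        rcases eq_or_lt_of_le (hS0 ω) with hS | hS
        · rw [← hS, div_zero]; norm_num
        · refine (div_le_one hS).mpr ?_
          have h4 : ∑ x ∈ s, T x ω
              = ∑ n, ∑ x ∈ s, W (ω n) * ({x} : Set σ).indicator 1 (ω n) := by
            rw [hTdef]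
            exact Finset.sum_comm
          rw [h4, hSdef]
          refine Finset.sum_le_sum fun n _ => ?_
          rw [← Finset.mul_sum]
          have h5 : ∑ x ∈ s, ({x} : Set σ).indicator (1 : σ → ℝ) (ω n) ≤ 1 := by
            have h6 : ∀ x ∈ s, ({x} : Set σ).indicator (1 : σ → ℝ) (ω n)
                = if ω n = x then 1 else 0 := fun x _ => hind_val x (ω n)
            rw [Finset.sum_congr rfl h6, Finset.sum_ite_eq]
            split_ifs <;> norm_num
          calc W (ω n) * ∑ x ∈ s, ({x} : Set σ).indicator (1 : σ → ℝ) (ω n)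
              ≤ W (ω n) * 1 := mul_le_mul_of_nonneg_left h5 (hW0 _)
            _ = W (ω n) := mul_one _
      calc (∑ x ∈ s, T x ω / S ω) * (Q ω * ((N:ℝ) - S ω) ^ 2)
          ≤ 1 * (Q ω * ((N:ℝ) - S ω) ^ 2) :=
            mul_le_mul_of_nonneg_right h3 (mul_nonneg (hQ0 ω) (sq_nonneg _))
        _ = _ := one_mul _
    calc ∑' ω : Fin N → σ, ∑ x ∈ s, Q ω * ((T x ω / S ω) * ((N:ℝ) - S ω) ^ 2)
        ≤ ∑' ω : Fin N → σ, Q ω * ((N:ℝ) - S ω) ^ 2 :=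
          Summable.tsum_le_tsum hle (summable_sum fun x _ => hQDx_sum x) hQD_sum
      _ = (N:ℝ) * χ := hQD_val
  have hBsummable : Summable B := summable_of_sum_le (fun x => hB0 x) hBpartial
  have hBtsum : ∑' x, B x ≤ (N:ℝ) * χ := Summable.tsum_le_of_sum_le hBsummable hBpartial
  have hLHSsum : Summable fun x => (pbarN p q N x - p x) ^ 2 :=
    Summable.of_nonneg_of_le (fun x => sq_nonneg _) hperx (hBsummable.div_const _)
  calc ∑' x, (pbarN p q N x - p x) ^ 2
      ≤ ∑' x, B x / (N:ℝ) ^ 2 := Summable.tsum_le_tsum hperx hLHSsum (hBsummable.div_const _)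
    _ = (∑' x, B x) / (N:ℝ) ^ 2 := tsum_div_const
    _ ≤ ((N:ℝ) * χ) / (N:ℝ) ^ 2 := div_le_div_of_nonneg_right hBtsum (by positivity)
    _ = χ / N := by field_simp
    _ ≤ 1 * ((1 + χ) / N) := by
        rw [one_mul]
        exact div_le_div_of_nonneg_right (by linarith) (le_of_lt hNpos)
end
end
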